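/- Let M be a multiplicatively written linearly ordered ℝ-vector space and m₀,...,m_k ∈ M be small and pairwise comparable (for all i, j there exist a,b > 0 with mⱼ^a < mᵢ < mⱼ^b). Let G be a generalized power series over a commutative ring K with natural support contained in [0,∞)^{k+1}. Then the support of the series F := G(m₀,...,m_k) in M is ⟨m₀,...,m_k⟩^×-natural: for every p in the multiplicative ℝ-subspace generated by m₀,...,m_k, only finitely many n ∈ supp(F) satisfy n > p. -/

import Mathlib

/-- Mathlib's former `OrderedSMul` (removed since), restated with its old fields. -/
class OrderedSMul (R M : Type*) [Zero R] [LT R] [LT M] [SMul R M] : Prop where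
  protected smul_lt_smul_of_pos : ∀ {a b : M}, ∀ {c : R}, a < b → 0 < c → c • a < c • b
  protected lt_of_smul_lt_smul_of_pos : ∀ {a b : M}, ∀ {c : R}, c • a < c • b → 0 < c → a < b

instance stmt3_posSMulMono {M : Type*} [AddCommGroup M] [LinearOrder M] [IsOrderedAddMonoid M]
    [Module ℝ M] [OrderedSMul ℝ M] : PosSMulMono ℝ M := by
  refine ⟨fun b hb a1 a2 h => ?_⟩
  rcases (show (0:ℝ) ≤ b from hb).eq_or_lt with h0 | hpos
  · subst h0; simp
  · rcases h.eq_or_lt with he | hlt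
    · rw [he]
    · exact (OrderedSMul.smul_lt_smul_of_pos hlt hpos).le

private lemma stmt3_aux {M : Type*} [AddCommGroup M] [LinearOrder M] [IsOrderedAddMonoid M] [Module ℝ M] [OrderedSMul ℝ M]
    {r s : ℝ} {x : M} (h : r ≤ s) (hx : x ≤ 0) : s • x ≤ r • x := by
  have h1 : (s - r) • x ≤ 0 := smul_nonpos_of_nonneg_of_nonpos (by linarith) hx
  rw [sub_smul] at h1
  exact sub_nonpos.mp h1

/-- The multiplicatively written linearly ordered `ℝ`-vector space `M` is formalized
additively: `m^α` corresponds to `∑ i, α i • m i`, small (`< 1`) corresponds to `< 0`,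
and `m, n` are comparable iff `a • n < m < b • n` for some `a, b > 0`.

A generalized power series `G` over `K` is given by its coefficient function
`c : [0,∞)^{k+1} → K`; its support is natural if each coordinate projection of the
support meets every `[0,a)` in a finite set.  The series `F = G(m₀, …, m_k)` has
coefficients `F g = ∑ᶠ {α : m^α = g} c α`.

If the `m i` are small and pairwise comparable, then the support of `F` is
`⟨m₀,…,m_k⟩^×`-natural: for every `p` in the `ℝ`-span of the `m i`, only finitely many
`g` in the support of `F` satisfy `g > p`. -/
theorem stmt3 {M : Type*} [AddCommGroup M] [LinearOrder M] [IsOrderedAddMonoid M] [Module ℝ M] [OrderedSMul ℝ M]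
    {K : Type*} [CommRing K]
    (k : ℕ) (m : Fin (k + 1) → M) (hsmall : ∀ i, m i < 0)
    (hcomp : ∀ i j, ∃ a b : ℝ, 0 < a ∧ 0 < b ∧ a • m j < m i ∧ m i < b • m j)
    (c : (Fin (k + 1) → ℝ) → K)
    (hnn : ∀ α, c α ≠ 0 → ∀ i, 0 ≤ α i)
    (hnatsupp : ∀ i, ∀ a : ℝ, 0 < a → {t : ℝ | t < a ∧ ∃ α, c α ≠ 0 ∧ α i = t}.Finite)
    (F : M → K)
    (hF : ∀ g : M, F g = ∑ᶠ (α : Fin (k + 1) → ℝ) (_ : ∑ i, α i • m i = g), c α)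
    (p : M) (hp : p ∈ Submodule.span ℝ (Set.range m)) :
    {g : M | F g ≠ 0 ∧ p < g}.Finite := by
  classical
  obtain ⟨a, b, ha, hb, hlow, hhigh⟩ :
      ∃ a b : Fin (k + 1) → ℝ, (∀ i, 0 < a i) ∧ (∀ i, 0 < b i) ∧
        (∀ i, a i • m 0 < m i) ∧ (∀ i, m i < b i • m 0) := by
    choose a b ha hb h1 h2 using fun i => hcomp i 0
    exact ⟨a, b, ha, hb, h1, h2⟩
  have hm0 : m 0 < 0 := hsmall 0
  -- lower bound for p
  obtain ⟨R, hR, hRp, -⟩ : ∃ R : ℝ, 0 < R ∧ R • m 0 ≤ p ∧ R • m 0 ≤ -p := by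
    induction hp using Submodule.span_induction with
    | mem x hx =>
      obtain ⟨i, rfl⟩ := hx
      refine ⟨a i, ha i, (hlow i).le, ?_⟩
      have h1 : a i • m 0 ≤ 0 := smul_nonpos_of_nonneg_of_nonpos (ha i).le hm0.le
      have h2 : (0:M) ≤ -m i := neg_nonneg.mpr (hsmall i).le
      exact h1.trans h2
    | zero =>
      refine ⟨1, one_pos, ?_, ?_⟩ <;> simpa using hm0.le
    | add x y hx hy ihx ihy =>
      obtain ⟨R1, hR1, h1, h1'⟩ := ihx
      obtain ⟨R2, hR2, h2, h2'⟩ := ihy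
      refine ⟨R1 + R2, by linarith, ?_, ?_⟩
      · rw [add_smul]; exact add_le_add h1 h2
      · rw [add_smul, neg_add]; exact add_le_add h1' h2'
    | smul r x hx ihx =>
      obtain ⟨R1, hR1, h1, h1'⟩ := ihx
      rcases le_or_gt 0 r with hr | hr
      · refine ⟨r * R1 + 1, by positivity, ?_, ?_⟩
        · calc (r * R1 + 1) • m 0 = (r * R1) • m 0 + m 0 := by rw [add_smul, one_smul]
            _ ≤ (r * R1) • m 0 := (add_le_iff_nonpos_right _).mpr hm0.le
            _ = r • R1 • m 0 := by rw [mul_smul]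
            _ ≤ r • x := smul_le_smul_of_nonneg_left h1 hr
        · calc (r * R1 + 1) • m 0 = (r * R1) • m 0 + m 0 := by rw [add_smul, one_smul]
            _ ≤ (r * R1) • m 0 := (add_le_iff_nonpos_right _).mpr hm0.le
            _ = r • R1 • m 0 := by rw [mul_smul]
            _ ≤ r • (-x) := smul_le_smul_of_nonneg_left h1' hr
            _ = -(r • x) := by rw [smul_neg]
      · refine ⟨(-r) * R1 + 1, by nlinarith, ?_, ?_⟩
        · calc ((-r) * R1 + 1) • m 0 = ((-r) * R1) • m 0 + m 0 := by rw [add_smul, one_smul]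
            _ ≤ ((-r) * R1) • m 0 := (add_le_iff_nonpos_right _).mpr hm0.le
            _ = (-r) • R1 • m 0 := by rw [mul_smul]
            _ ≤ (-r) • (-x) := smul_le_smul_of_nonneg_left h1' (by linarith)
            _ = r • x := by rw [smul_neg, neg_smul, neg_neg]
        · calc ((-r) * R1 + 1) • m 0 = ((-r) * R1) • m 0 + m 0 := by rw [add_smul, one_smul]
            _ ≤ ((-r) * R1) • m 0 := (add_le_iff_nonpos_right _).mpr hm0.le
            _ = (-r) • R1 • m 0 := by rw [mul_smul]
            _ ≤ (-r) • x := smul_le_smul_of_nonneg_left h1 (by linarith)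
            _ = -(r • x) := by rw [neg_smul]
  -- the finite set of possible exponents
  set A : Fin (k + 1) → ℝ := fun i => R / b i + 1 with hA
  have hApos : ∀ i, 0 < A i := fun i => by have := hR; have := hb i; positivity
  set T : Fin (k + 1) → Set ℝ := fun i => {t : ℝ | t < A i ∧ ∃ α, c α ≠ 0 ∧ α i = t} with hTdef
  have hT : ∀ i, (T i).Finite := fun i => hnatsupp i (A i) (hApos i)
  have hfin : (Set.pi Set.univ T).Finite := Set.Finite.pi hT
  apply (hfin.image fun α : Fin (k + 1) → ℝ => ∑ i, α i • m i).subset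
  rintro g ⟨hFg, hpg⟩
  have hex : ∃ α, c α ≠ 0 ∧ ∑ i, α i • m i = g := by
    by_contra h
    push_neg at h
    apply hFg
    rw [hF]
    refine finsum_eq_zero_of_forall_eq_zero fun α => ?_
    rw [finsum_eq_if]
    split_ifs with hsum
    · by_contra hc
      exact h α hc hsum
    · rfl
  obtain ⟨α, hcα, hsum⟩ := hex
  have hα0 : ∀ i, 0 ≤ α i := hnn α hcα
  have hgb : g ≤ (∑ i, α i * b i) • m 0 := by
    rw [← hsum, Finset.sum_smul]
    refine Finset.sum_le_sum fun i _ => ?_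
    rw [mul_smul]
    exact smul_le_smul_of_nonneg_left (hhigh i).le (hα0 i)
  have hSR : (∑ i, α i * b i) < R := by
    by_contra h
    push_neg at h
    have h2 : (∑ i, α i * b i) • m 0 ≤ R • m 0 := stmt3_aux h hm0.le
    exact absurd (hRp.trans_lt (hpg.trans_le hgb)) (not_lt.mpr h2)
  refine ⟨α, fun i _ => ?_, hsum⟩
  have hib : α i * b i ≤ ∑ j, α j * b j :=
    Finset.single_le_sum (fun j _ => mul_nonneg (hα0 j) (hb j).le) (Finset.mem_univ i)
  have hαi : α i < R / b i := (lt_div_iff₀ (hb i)).mpr (hib.trans_lt hSR)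
  exact ⟨hαi.trans (by simp [hA]), α, hcα, rfl⟩
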